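/- Let a > 0 and let X ~ Exp(1). Then as a → ∞, E[log₂(1 + aX)] = log₂ a − C/ln 2 + o(1), where C is the Euler–Mascheroni constant. -/

import Mathlib

open MeasureTheory Filter Topology Set

lemma aux_value :
    (∫ t : ℝ in Ioi 0, Real.log t * Real.exp (-t)) = -Real.eulerMascheroniConstant := by
  have h1 : HasDerivAt Complex.GammaIntegral
      (∫ t : ℝ in Ioi 0, ((Real.log t * Real.exp (-t) : ℝ) : ℂ)) 1 := by
    have h := Complex.hasDerivAt_GammaIntegral (s := 1) (by norm_num)
    convert h using 2
    funext t; rw [sub_self, Complex.cpow_zero, one_mul, Complex.ofReal_mul]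
  have h2 : HasDerivAt Complex.Gamma
      (∫ t : ℝ in Ioi 0, ((Real.log t * Real.exp (-t) : ℝ) : ℂ)) 1 := by
    refine h1.congr_of_eventuallyEq ?_
    have hopen : IsOpen {s : ℂ | 0 < s.re} := isOpen_lt continuous_const Complex.continuous_re
    filter_upwards [hopen.mem_nhds (by norm_num : (0:ℝ) < (1:ℂ).re)] with s hs
    exact Complex.Gamma_eq_integral hs
  have this := h2.unique Complex.hasDerivAt_Gamma_one
  have h4 : ∫ x in Ioi 0, ((Real.log x * Real.exp (-x) : ℝ) : ℂ)
      = ((∫ x in Ioi 0, Real.log x * Real.exp (-x) : ℝ) : ℂ) := integral_ofReal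
  rw [h4] at this
  exact_mod_cast this

lemma aux_intC : IntegrableOn (fun t : ℝ => Real.log t • (Real.exp (-t) : ℂ)) (Ioi 0) := by
  have h := (mellin_hasDerivAt_of_isBigO_rpow (E := ℂ) (a := 2) (b := 0)
      (f := fun x : ℝ => (Real.exp (-x) : ℂ)) (s := 1) ?_ ?_ ?_ ?_ ?_).1
  · have := h
    unfold MellinConvergent at this
    simpa [sub_self, Complex.cpow_zero] using this
  · refine (Continuous.continuousOn ?_).locallyIntegrableOn measurableSet_Ioi
    exact Complex.continuous_ofReal.comp (Real.continuous_exp.comp continuous_neg)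
  · rw [← Asymptotics.isBigO_norm_left]
    simp_rw [Complex.norm_real,
      Asymptotics.isBigO_norm_left]
    simpa only [neg_one_mul] using
      (isLittleO_exp_neg_mul_rpow_atTop zero_lt_one _).isBigO
  · norm_num
  · simp_rw [neg_zero, Real.rpow_zero]
    refine Asymptotics.isBigO_const_of_tendsto (?_ : Tendsto _ _ (𝓝 (1 : ℂ))) one_ne_zero
    rw [(by simp : (1 : ℂ) = Real.exp (-0))]
    exact (Complex.continuous_ofReal.comp
      (Real.continuous_exp.comp continuous_neg)).continuousWithinAt
  · norm_num

lemma aux_int_abs : IntegrableOn (fun t : ℝ => |Real.log t| * Real.exp (-t)) (Ioi 0) := by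
  have := aux_intC.norm
  have heq : ∀ t : ℝ, ‖Real.log t • (Real.exp (-t) : ℂ)‖ = |Real.log t| * Real.exp (-t) := by
    intro t
    rw [norm_smul, Real.norm_eq_abs, Complex.norm_real, Real.norm_eq_abs,
      abs_of_nonneg (Real.exp_pos _).le]
  simpa only [heq, IntegrableOn] using this

lemma aux_x_exp : IntegrableOn (fun x : ℝ => x * Real.exp (-x)) (Ioi 0) := by
  have := Real.GammaIntegral_convergent (by norm_num : (0:ℝ) < 2)
  simp only [show (2:ℝ) - 1 = 1 by norm_num, Real.rpow_one] at this
  simpa [mul_comm] using this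

lemma aux_exp : IntegrableOn (fun x : ℝ => Real.exp (-x)) (Ioi 0) := by
  have := Real.GammaIntegral_convergent (by norm_num : (0:ℝ) < 1)
  simpa using this

lemma aux_bound_int :
    IntegrableOn (fun x : ℝ => (|Real.log x| + x) * Real.exp (-x)) (Ioi 0) := by
  have := aux_int_abs.add aux_x_exp
  exact this.congr_fun (fun x _ => by simp only [Pi.add_apply]; ring) measurableSet_Ioi

lemma aux_ptwise {a x : ℝ} (ha : 1 ≤ a) (hx : 0 < x) :
    |Real.log (a⁻¹ + x)| ≤ |Real.log x| + x := by
  have ha0 : (0:ℝ) < a := lt_of_lt_of_le one_pos ha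
  have hinv : 0 < a⁻¹ := inv_pos.mpr ha0
  have hinv1 : a⁻¹ ≤ 1 := inv_le_one_of_one_le₀ ha
  refine abs_le.mpr ⟨?_, ?_⟩
  · have := Real.log_le_log hx (by linarith : x ≤ a⁻¹ + x)
    have := neg_abs_le (Real.log x)
    nlinarith [neg_abs_le (Real.log x), Real.log_le_log hx (by linarith : x ≤ a⁻¹ + x)]
  · have h1 : Real.log (a⁻¹ + x) ≤ a⁻¹ + x - 1 := Real.log_le_sub_one_of_pos (by linarith)
    have := abs_nonneg (Real.log x)
    linarith

lemma aux_meas (c : ℝ) :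
    AEStronglyMeasurable (fun x : ℝ => Real.log (c + x) * Real.exp (-x))
      (volume.restrict (Ioi 0)) := by
  exact ((Real.measurable_log.comp (measurable_const.add measurable_id)).mul
    (Real.measurable_exp.comp measurable_neg)).aestronglyMeasurable

lemma aux_integrable {a : ℝ} (ha : 1 ≤ a) :
    IntegrableOn (fun x : ℝ => Real.log (a⁻¹ + x) * Real.exp (-x)) (Ioi 0) := by
  refine Integrable.mono' aux_bound_int (aux_meas _) ?_
  filter_upwards [ae_restrict_mem measurableSet_Ioi] with x hx
  rw [Real.norm_eq_abs, abs_mul, abs_of_nonneg (Real.exp_pos _).le]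
  exact mul_le_mul_of_nonneg_right (aux_ptwise ha hx) (Real.exp_pos _).le

lemma aux_tendsto :
    Tendsto (fun a : ℝ => ∫ x in Ioi 0, Real.log (a⁻¹ + x) * Real.exp (-x)) atTop
      (𝓝 (-Real.eulerMascheroniConstant)) := by
  rw [← aux_value]
  refine tendsto_integral_filter_of_dominated_convergence
    (fun x => (|Real.log x| + x) * Real.exp (-x)) ?_ ?_ aux_bound_int ?_
  · exact Eventually.of_forall fun a => aux_meas _
  · filter_upwards [eventually_ge_atTop (1:ℝ)] with a ha
    filter_upwards [ae_restrict_mem measurableSet_Ioi] with x hx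
    rw [Real.norm_eq_abs, abs_mul, abs_of_nonneg (Real.exp_pos _).le]
    exact mul_le_mul_of_nonneg_right (aux_ptwise ha hx) (Real.exp_pos _).le
  · filter_upwards [ae_restrict_mem measurableSet_Ioi] with x hx
    have h1 : Tendsto (fun a : ℝ => a⁻¹ + x) atTop (𝓝 x) := by
      simpa using tendsto_inv_atTop_zero.add (tendsto_const_nhds (x := x))
    exact ((Real.continuousAt_log hx.ne').tendsto.comp h1).mul tendsto_const_nhds


/-- As `a → ∞`, `E[log₂(1 + aX)] = log₂ a − C/ln 2 + o(1)` for `X ~ Exp(1)`,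
where `C` is the Euler–Mascheroni constant. -/
theorem stmt_7 :
    Tendsto
      (fun a : ℝ =>
        (∫ x in Set.Ioi (0 : ℝ), Real.logb 2 (1 + a * x) * Real.exp (-x))
          - (Real.logb 2 a - Real.eulerMascheroniConstant / Real.log 2))
      atTop (𝓝 0) := by
  have key : ∀ᶠ a : ℝ in atTop,
      (∫ x in Ioi (0 : ℝ), Real.logb 2 (1 + a * x) * Real.exp (-x))
          - (Real.logb 2 a - Real.eulerMascheroniConstant / Real.log 2)
        = ((∫ x in Ioi (0:ℝ), Real.log (a⁻¹ + x) * Real.exp (-x))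
            + Real.eulerMascheroniConstant) / Real.log 2 := by
    filter_upwards [eventually_ge_atTop (1:ℝ)] with a ha
    have ha0 : (0:ℝ) < a := lt_of_lt_of_le one_pos ha
    have h1 : (∫ x in Ioi (0 : ℝ), Real.logb 2 (1 + a * x) * Real.exp (-x))
        = (∫ x in Ioi (0 : ℝ), Real.log (1 + a * x) * Real.exp (-x)) / Real.log 2 := by
      rw [← integral_div]
      congr 1
      funext x
      rw [Real.logb]
      ring
    have h2 : (∫ x in Ioi (0 : ℝ), Real.log (1 + a * x) * Real.exp (-x))
        = (∫ x in Ioi (0 : ℝ),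
            (Real.log a * Real.exp (-x) + Real.log (a⁻¹ + x) * Real.exp (-x))) := by
      refine setIntegral_congr_fun measurableSet_Ioi fun x hx => ?_
      have hx0 : (0:ℝ) < x := hx
      have hax : 1 + a * x = a * (a⁻¹ + x) := by field_simp
      rw [hax, Real.log_mul ha0.ne' (by positivity), add_mul]
    have h3 : (∫ x in Ioi (0 : ℝ),
            (Real.log a * Real.exp (-x) + Real.log (a⁻¹ + x) * Real.exp (-x)))
        = Real.log a + (∫ x in Ioi (0:ℝ), Real.log (a⁻¹ + x) * Real.exp (-x)) := by
      rw [integral_add (aux_exp.const_mul _) (aux_integrable ha), integral_const_mul,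
        integral_exp_neg_Ioi_zero, mul_one]
    rw [h1, h2, h3, Real.logb]
    ring
  refine Tendsto.congr' (key.mono fun a h => h.symm) ?_
  have := (aux_tendsto.add_const Real.eulerMascheroniConstant).div_const (Real.log 2)
  simpa using this
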